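/- arXiv:1708.08112 — 4 statements merged into one kernel-verified Lean document; each statement's English description precedes it below -/
import Mathlib

section
/- Let a, b > 0 and let (k_n), (j_n) be sequences of positive integers with k_n → ∞, j_n → ∞ and k_n/j_n → a/b. Then the normalized nodal length ((k_n−1)b + (j_n−1)a)/√((πk_n/a)² + (πj_n/b)²) converges to (√2/π)·ab as n → ∞. Combined with the universal upper bound H¹(N(u_{k,j}))/√λ_{k,j} ≤ (√2/π)ab, this shows that the limsup of H¹(N(u))/√λ over all Dirichlet eigenfunctions of the rectangle as λ → ∞ equals (√2/π)·Area(R). -/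
open Filter Topology

/-- If `k_n, j_n → ∞` with `k_n/j_n → a/b`, then the normalized nodal lengths
`((k_n−1)b + (j_n−1)a)/√λ_{k_n,j_n}` converge to `(√2/π)·ab`; combined with the
universal upper bound, the limsup of `H¹(N(u))/√λ` over all Dirichlet eigenfunctions
of the rectangle as `λ → ∞` equals `(√2/π)·Area(R) = (√2/π)·ab`. -/
theorem stmt_7 (a b : ℝ) (ha : 0 < a) (hb : 0 < b)
    (kn jn : ℕ → ℕ) (hkpos : ∀ n, 0 < kn n) (hjpos : ∀ n, 0 < jn n)
    (hk : Tendsto kn atTop atTop) (hj : Tendsto jn atTop atTop)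
    (hratio : Tendsto (fun n => (kn n : ℝ) / (jn n : ℝ)) atTop (𝓝 (a / b))) :
    Tendsto (fun n =>
        (((kn n : ℝ) - 1) * b + ((jn n : ℝ) - 1) * a) /
          Real.sqrt ((Real.pi * kn n / a) ^ 2 + (Real.pi * jn n / b) ^ 2))
      atTop (𝓝 (Real.sqrt 2 / Real.pi * (a * b)))
    ∧ limsup
        (fun p : ℕ × ℕ =>
          (((p.1 : ℝ) - 1) * b + ((p.2 : ℝ) - 1) * a) /
            Real.sqrt ((Real.pi * p.1 / a) ^ 2 + (Real.pi * p.2 / b) ^ 2))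
        ((comap (fun p : ℕ × ℕ => (Real.pi * p.1 / a) ^ 2 + (Real.pi * p.2 / b) ^ 2) atTop)
          ⊓ 𝓟 {p : ℕ × ℕ | 0 < p.1 ∧ 0 < p.2})
        = Real.sqrt 2 / Real.pi * (a * b) := by
  have hπ := Real.pi_pos
  have ha' := ha.ne'
  have hb' := hb.ne'
  have hs2 : (0:ℝ) < Real.sqrt 2 := Real.sqrt_pos.2 (by norm_num)
  have hsq2 : Real.sqrt 2 ^ 2 = 2 := Real.sq_sqrt (by norm_num)
  have hLpos : (0:ℝ) < Real.sqrt 2 / Real.pi * (a * b) := by positivity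
  -- Part 1: the limit along the sequences
  have hjR : Tendsto (fun n => (jn n : ℝ)) atTop atTop :=
    tendsto_natCast_atTop_atTop.comp hj
  have hjinv : Tendsto (fun n => ((jn n : ℝ))⁻¹) atTop (𝓝 0) := hjR.inv_tendsto_atTop
  have hnum : Tendsto
      (fun n => ((kn n : ℝ) / (jn n : ℝ) - ((jn n : ℝ))⁻¹) * b + (1 - ((jn n : ℝ))⁻¹) * a)
      atTop (𝓝 ((a / b - 0) * b + (1 - 0) * a)) :=
    ((hratio.sub hjinv).mul_const b).add ((tendsto_const_nhds.sub hjinv).mul_const a)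
  have hden : Tendsto
      (fun n => Real.sqrt ((Real.pi / a) ^ 2 * ((kn n : ℝ) / (jn n : ℝ)) ^ 2 + (Real.pi / b) ^ 2))
      atTop (𝓝 (Real.sqrt ((Real.pi / a) ^ 2 * (a / b) ^ 2 + (Real.pi / b) ^ 2))) := by
    apply (Real.continuous_sqrt.tendsto _).comp
    exact (tendsto_const_nhds.mul (hratio.pow 2)).add tendsto_const_nhds
  have hdenval : Real.sqrt ((Real.pi / a) ^ 2 * (a / b) ^ 2 + (Real.pi / b) ^ 2)
      = Real.sqrt 2 * (Real.pi / b) := by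
    have h1 : (Real.pi / a) ^ 2 * (a / b) ^ 2 + (Real.pi / b) ^ 2 = 2 * (Real.pi / b) ^ 2 := by
      field_simp; ring
    rw [h1, show (2 : ℝ) * (Real.pi / b) ^ 2 = (Real.sqrt 2 * (Real.pi / b)) ^ 2 by
      rw [mul_pow, hsq2]]
    exact Real.sqrt_sq (by positivity)
  have hdenne : Real.sqrt ((Real.pi / a) ^ 2 * (a / b) ^ 2 + (Real.pi / b) ^ 2) ≠ 0 := by
    rw [hdenval]; positivity
  have hlimval : ((a / b - 0) * b + (1 - 0) * a) /
      Real.sqrt ((Real.pi / a) ^ 2 * (a / b) ^ 2 + (Real.pi / b) ^ 2)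
      = Real.sqrt 2 / Real.pi * (a * b) := by
    rw [hdenval, div_eq_iff (by positivity)]
    have h2 : Real.sqrt 2 * Real.sqrt 2 = 2 := Real.mul_self_sqrt (by norm_num)
    field_simp
    linear_combination (-a) * hsq2
  have hpart1 : Tendsto (fun n =>
        (((kn n : ℝ) - 1) * b + ((jn n : ℝ) - 1) * a) /
          Real.sqrt ((Real.pi * kn n / a) ^ 2 + (Real.pi * jn n / b) ^ 2))
      atTop (𝓝 (Real.sqrt 2 / Real.pi * (a * b))) := by
    have hT := hnum.div hden hdenne
    rw [hlimval] at hT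
    apply hT.congr
    intro n
    have hjpos' : (0:ℝ) < (jn n : ℝ) := by exact_mod_cast hjpos n
    have hjne := hjpos'.ne'
    have key : Real.sqrt ((Real.pi * kn n / a) ^ 2 + (Real.pi * jn n / b) ^ 2)
        = (jn n : ℝ) *
          Real.sqrt ((Real.pi / a) ^ 2 * ((kn n : ℝ) / (jn n : ℝ)) ^ 2 + (Real.pi / b) ^ 2) := by
      rw [← Real.sqrt_sq hjpos'.le, ← Real.sqrt_mul (by positivity)]
      congr 1
      field_simp
      ring
      rw [Real.sq_sqrt (sq_nonneg _)]
    have keyN : ((kn n : ℝ) / (jn n : ℝ) - ((jn n : ℝ))⁻¹) * b + (1 - ((jn n : ℝ))⁻¹) * a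
        = (((kn n : ℝ) - 1) * b + ((jn n : ℝ) - 1) * a) / (jn n : ℝ) := by
      field_simp
    simp only [Pi.div_apply]
    rw [key, ← div_div, ← keyN]
  refine ⟨hpart1, ?_⟩
  -- Part 2: the limsup
  -- universal upper and lower bounds on the set of positive pairs
  have hub : ∀ k j : ℕ, 0 < k → 0 < j →
      (((k : ℝ) - 1) * b + ((j : ℝ) - 1) * a) /
        Real.sqrt ((Real.pi * k / a) ^ 2 + (Real.pi * j / b) ^ 2)
      ≤ Real.sqrt 2 / Real.pi * (a * b) := by
    intro k j hk1 hj1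
    have hk' : (1:ℝ) ≤ (k:ℝ) := by exact_mod_cast hk1
    have hj' : (1:ℝ) ≤ (j:ℝ) := by exact_mod_cast hj1
    set x : ℝ := Real.pi * k / a with hx
    set y : ℝ := Real.pi * j / b with hy
    have hxpos : 0 < x := by rw [hx]; positivity
    have hypos : 0 < y := by rw [hy]; positivity
    have hD : 0 < Real.sqrt (x ^ 2 + y ^ 2) := Real.sqrt_pos.2 (by positivity)
    have hDge : (x + y) / Real.sqrt 2 ≤ Real.sqrt (x ^ 2 + y ^ 2) := by
      rw [div_le_iff₀ hs2]
      have h1 : x + y = Real.sqrt ((x + y) ^ 2) := (Real.sqrt_sq (by positivity)).symm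
      rw [h1, ← Real.sqrt_mul (by positivity)]
      apply Real.sqrt_le_sqrt
      nlinarith [sq_nonneg (x - y)]
    have hNle : ((k:ℝ) - 1) * b + ((j:ℝ) - 1) * a
        ≤ Real.sqrt 2 / Real.pi * (a * b) * ((x + y) / Real.sqrt 2) := by
      have heq : Real.sqrt 2 / Real.pi * (a * b) * ((x + y) / Real.sqrt 2)
          = (k:ℝ) * b + (j:ℝ) * a := by
        rw [hx, hy]
        field_simp
      rw [heq]
      nlinarith
    rw [div_le_iff₀ hD]
    calc ((k:ℝ) - 1) * b + ((j:ℝ) - 1) * a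
        ≤ Real.sqrt 2 / Real.pi * (a * b) * ((x + y) / Real.sqrt 2) := hNle
      _ ≤ Real.sqrt 2 / Real.pi * (a * b) * Real.sqrt (x ^ 2 + y ^ 2) :=
          mul_le_mul_of_nonneg_left hDge hLpos.le
  have hlb : ∀ k j : ℕ, 0 < k → 0 < j →
      (0:ℝ) ≤ (((k : ℝ) - 1) * b + ((j : ℝ) - 1) * a) /
        Real.sqrt ((Real.pi * k / a) ^ 2 + (Real.pi * j / b) ^ 2) := by
    intro k j hk1 hj1
    have hk' : (1:ℝ) ≤ (k:ℝ) := by exact_mod_cast hk1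
    have hj' : (1:ℝ) ≤ (j:ℝ) := by exact_mod_cast hj1
    apply div_nonneg _ (Real.sqrt_nonneg _)
    nlinarith
  -- the sequence n ↦ (kn n, jn n) tends to the filter
  have hg : Tendsto (fun n => (kn n, jn n))
      atTop
      ((comap (fun p : ℕ × ℕ => (Real.pi * p.1 / a) ^ 2 + (Real.pi * p.2 / b) ^ 2) atTop)
        ⊓ 𝓟 {p : ℕ × ℕ | 0 < p.1 ∧ 0 < p.2}) := by
    rw [tendsto_inf]
    constructor
    · rw [tendsto_comap_iff]
      have hkR : Tendsto (fun n => (kn n : ℝ)) atTop atTop :=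
        tendsto_natCast_atTop_atTop.comp hk
      have h1 : Tendsto (fun n => Real.pi * (kn n : ℝ) / a) atTop atTop := by
        have h := hkR.atTop_mul_const (show (0:ℝ) < Real.pi / a by positivity)
        apply h.congr
        intro n; field_simp
      have h2 : Tendsto (fun n => (Real.pi * (kn n : ℝ) / a) ^ 2) atTop atTop :=
        (tendsto_pow_atTop (by norm_num : 2 ≠ 0)).comp h1
      exact Tendsto.atTop_add_nonneg h2 (fun n => sq_nonneg _)
    · rw [tendsto_principal]
      exact Eventually.of_forall fun n => ⟨hkpos n, hjpos n⟩
  have hFne : ((comap (fun p : ℕ × ℕ => (Real.pi * p.1 / a) ^ 2 + (Real.pi * p.2 / b) ^ 2) atTop)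
      ⊓ 𝓟 {p : ℕ × ℕ | 0 < p.1 ∧ 0 < p.2}).NeBot := hg.neBot
  have hev_ub : ∀ᶠ p in
      ((comap (fun p : ℕ × ℕ => (Real.pi * p.1 / a) ^ 2 + (Real.pi * p.2 / b) ^ 2) atTop)
        ⊓ 𝓟 {p : ℕ × ℕ | 0 < p.1 ∧ 0 < p.2}),
      (((p.1 : ℝ) - 1) * b + ((p.2 : ℝ) - 1) * a) /
        Real.sqrt ((Real.pi * p.1 / a) ^ 2 + (Real.pi * p.2 / b) ^ 2)
      ≤ Real.sqrt 2 / Real.pi * (a * b) := by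
    rw [eventually_inf_principal]
    exact Eventually.of_forall fun p hp => hub p.1 p.2 hp.1 hp.2
  have hev_lb : ∀ᶠ p in
      ((comap (fun p : ℕ × ℕ => (Real.pi * p.1 / a) ^ 2 + (Real.pi * p.2 / b) ^ 2) atTop)
        ⊓ 𝓟 {p : ℕ × ℕ | 0 < p.1 ∧ 0 < p.2}),
      (0:ℝ) ≤ (((p.1 : ℝ) - 1) * b + ((p.2 : ℝ) - 1) * a) /
        Real.sqrt ((Real.pi * p.1 / a) ^ 2 + (Real.pi * p.2 / b) ^ 2) := by
    rw [eventually_inf_principal]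
    exact Eventually.of_forall fun p hp => hlb p.1 p.2 hp.1 hp.2
  have hbdd := isBoundedUnder_of_eventually_le hev_ub
  have hcobdd := (isBoundedUnder_of_eventually_ge hev_lb).isCoboundedUnder_le
  apply le_antisymm
  · exact limsup_le_of_le hcobdd hev_ub
  · -- lower bound for the limsup
    apply le_of_forall_pos_le_add
    intro ε hε
    have h1 : ∀ᶠ n in atTop,
        Real.sqrt 2 / Real.pi * (a * b) - ε ≤
          (((kn n : ℝ) - 1) * b + ((jn n : ℝ) - 1) * a) /
            Real.sqrt ((Real.pi * kn n / a) ^ 2 + (Real.pi * jn n / b) ^ 2) :=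
      hpart1.eventually (eventually_ge_nhds (by linarith))
    have hfreq : ∃ᶠ p in
        ((comap (fun p : ℕ × ℕ => (Real.pi * p.1 / a) ^ 2 + (Real.pi * p.2 / b) ^ 2) atTop)
          ⊓ 𝓟 {p : ℕ × ℕ | 0 < p.1 ∧ 0 < p.2}),
        Real.sqrt 2 / Real.pi * (a * b) - ε ≤
          (((p.1 : ℝ) - 1) * b + ((p.2 : ℝ) - 1) * a) /
            Real.sqrt ((Real.pi * p.1 / a) ^ 2 + (Real.pi * p.2 / b) ^ 2) := by
      apply Frequently.filter_mono _ hg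
      rw [frequently_map]
      exact h1.frequently
    have h2 := le_limsup_of_frequently_le hfreq hbdd
    linarith
end

section
/- Let a, b > 0. The normalized nodal length of the eigenfunctions u_{1,j} satisfies ((1−1)b + (j−1)a)/√((π/a)² + (πj/b)²) = (j−1)a/√((π/a)² + (πj/b)²) → ab/π as j → ∞. Combined with the universal lower bound H¹(N(u_{k,j}))/√λ_{k,j} ≥ ab/π − (a+b)/√λ_{k,j}, this shows that the liminf of H¹(N(u))/√λ over all Dirichlet eigenfunctions of the rectangle as λ → ∞ equals (1/π)·Area(R). -/
open Filter Topology

private lemma sqrt_atTop' : Tendsto Real.sqrt atTop atTop := by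
  apply tendsto_atTop_atTop.mpr
  intro c
  refine ⟨c ^ 2, fun x hx => ?_⟩
  calc c ≤ |c| := le_abs_self c
    _ = Real.sqrt (c ^ 2) := (Real.sqrt_sq_eq_abs c).symm
    _ ≤ Real.sqrt x := Real.sqrt_le_sqrt hx

private lemma part1 (a b : ℝ) (ha : 0 < a) (hb : 0 < b) :
    Tendsto (fun j : ℕ =>
        ((j : ℝ) - 1) * a / Real.sqrt ((Real.pi / a) ^ 2 + (Real.pi * j / b) ^ 2))
      atTop (𝓝 (a * b / Real.pi)) := by
  have hpi := Real.pi_pos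
  have h0 : Tendsto (fun j : ℕ => (1 : ℝ) / j) atTop (𝓝 0) :=
    tendsto_one_div_atTop_nhds_zero_nat
  set h : ℝ → ℝ := fun t => (1 - t) * a / Real.sqrt ((Real.pi * t / a) ^ 2 + (Real.pi / b) ^ 2)
    with hh
  have hden0 : Real.sqrt ((Real.pi * (0:ℝ) / a) ^ 2 + (Real.pi / b) ^ 2) = Real.pi / b := by
    rw [show (Real.pi * (0:ℝ) / a) ^ 2 + (Real.pi / b) ^ 2 = (Real.pi / b) ^ 2 by ring]
    exact Real.sqrt_sq (by positivity)
  have hc : ContinuousAt h 0 := by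
    apply ContinuousAt.div
    · fun_prop
    · fun_prop
    · rw [hden0]; positivity
  have hval : h 0 = a * b / Real.pi := by
    simp only [hh]
    rw [hden0]
    field_simp
    norm_num
  have hcomp : Tendsto (fun j : ℕ => h (1 / j)) atTop (𝓝 (a * b / Real.pi)) := by
    rw [← hval]
    exact hc.tendsto.comp h0
  apply hcomp.congr'
  filter_upwards [eventually_ge_atTop 1] with j hj
  have hj' : (0 : ℝ) < j := by exact_mod_cast hj
  have key : (Real.pi * (1 / (j:ℝ)) / a) ^ 2 + (Real.pi / b) ^ 2
      = ((Real.pi / a) ^ 2 + (Real.pi * j / b) ^ 2) / (j:ℝ) ^ 2 := by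
    field_simp
  have hXpos : 0 < (Real.pi / a) ^ 2 + (Real.pi * (j:ℝ) / b) ^ 2 := by positivity
  simp only [hh, key]
  rw [Real.sqrt_div hXpos.le, Real.sqrt_sq hj'.le]
  have hs : 0 < Real.sqrt ((Real.pi / a) ^ 2 + (Real.pi * (j:ℝ) / b) ^ 2) :=
    Real.sqrt_pos.mpr hXpos
  field_simp

/-- The normalized nodal lengths of the eigenfunctions `u_{1,j}` of the rectangle,
namely `(j−1)a/√((π/a)² + (πj/b)²)`, converge to `ab/π` as `j → ∞`; combined with the
universal lower bound, the liminf of `H¹(N(u))/√λ` over all Dirichlet eigenfunctions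
of the rectangle as `λ → ∞` equals `(1/π)·Area(R) = (1/π)·ab`. -/
theorem stmt_8 (a b : ℝ) (ha : 0 < a) (hb : 0 < b) :
    Tendsto (fun j : ℕ =>
        ((j : ℝ) - 1) * a / Real.sqrt ((Real.pi / a) ^ 2 + (Real.pi * j / b) ^ 2))
      atTop (𝓝 (a * b / Real.pi))
    ∧ liminf
        (fun p : ℕ × ℕ =>
          (((p.1 : ℝ) - 1) * b + ((p.2 : ℝ) - 1) * a) /
            Real.sqrt ((Real.pi * p.1 / a) ^ 2 + (Real.pi * p.2 / b) ^ 2))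
        ((comap (fun p : ℕ × ℕ => (Real.pi * p.1 / a) ^ 2 + (Real.pi * p.2 / b) ^ 2) atTop)
          ⊓ 𝓟 {p : ℕ × ℕ | 0 < p.1 ∧ 0 < p.2})
        = 1 / Real.pi * (a * b) := by
  have hpi := Real.pi_pos
  have hP1 := part1 a b ha hb
  refine ⟨hP1, ?_⟩
  set lam : ℕ × ℕ → ℝ := fun p => (Real.pi * p.1 / a) ^ 2 + (Real.pi * p.2 / b) ^ 2 with hlam
  set F : ℕ × ℕ → ℝ := fun p =>
    (((p.1 : ℝ) - 1) * b + ((p.2 : ℝ) - 1) * a) / Real.sqrt (lam p) with hF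
  set S : Set (ℕ × ℕ) := {p : ℕ × ℕ | 0 < p.1 ∧ 0 < p.2} with hS
  set L : Filter (ℕ × ℕ) := (comap lam atTop) ⊓ 𝓟 S with hL
  -- the subsequence (1, j)
  have hg1 : Tendsto (fun j : ℕ => lam (1, j)) atTop atTop := by
    have h1 : Tendsto (fun j : ℕ => Real.pi * (j:ℝ) / b) atTop atTop := by
      have : Tendsto (fun j : ℕ => (Real.pi / b) * (j:ℝ)) atTop atTop :=
        (tendsto_natCast_atTop_atTop).const_mul_atTop (by positivity)
      refine this.congr (fun j => by ring)
    have h2 : Tendsto (fun j : ℕ => (Real.pi * (j:ℝ) / b) ^ 2) atTop atTop :=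
      (tendsto_pow_atTop (n := 2) (by norm_num)).comp h1
    simpa only [hlam] using tendsto_atTop_add_const_left atTop ((Real.pi * ((1:ℕ):ℝ) / a) ^ 2) h2
  have hg : Tendsto (fun j : ℕ => ((1 : ℕ), j)) atTop L := by
    rw [hL]
    refine tendsto_inf.mpr ⟨tendsto_comap_iff.mpr ?_, tendsto_principal.mpr ?_⟩
    · exact hg1
    · filter_upwards [eventually_gt_atTop 0] with j hj
      exact ⟨Nat.one_pos, hj⟩
  haveI : L.NeBot := hg.neBot
  have hSev : ∀ᶠ p in L, p ∈ S := by
    rw [hL]; exact mem_inf_of_right (mem_principal_self S)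
  have hlamT : Tendsto lam L atTop := tendsto_comap.mono_left inf_le_left
  have hsqrtT : Tendsto (fun p => Real.sqrt (lam p)) L atTop := sqrt_atTop'.comp hlamT
  have hE : Tendsto (fun p => (a + b) / Real.sqrt (lam p)) L (𝓝 0) :=
    tendsto_const_nhds.div_atTop hsqrtT
  -- pointwise facts on S
  have hpoint : ∀ p : ℕ × ℕ, p ∈ S →
      1 / Real.pi * (a * b) - (a + b) / Real.sqrt (lam p) ≤ F p ∧ 0 ≤ F p := by
    rintro ⟨k, j⟩ ⟨hk, hj⟩
    have hk1 : (1 : ℝ) ≤ k := by exact_mod_cast hk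
    have hj1 : (1 : ℝ) ≤ j := by exact_mod_cast hj
    have hXpos : 0 < lam (k, j) := by
      have : (0:ℝ) < (Real.pi * k / a) ^ 2 := by positivity
      have h2 : (0:ℝ) ≤ (Real.pi * (j:ℝ) / b) ^ 2 := sq_nonneg _
      simp only [hlam]; nlinarith
    set s := Real.sqrt (lam (k, j)) with hs
    have hspos : 0 < s := Real.sqrt_pos.mpr hXpos
    have hs2 : s ^ 2 = lam (k, j) := Real.sq_sqrt hXpos.le
    have hnum : (((k:ℝ)) - 1) * b + (((j:ℝ)) - 1) * a = (k * b + j * a) - (a + b) := by ring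
    have hkey : 1 / Real.pi * (a * b) * s ≤ (k:ℝ) * b + (j:ℝ) * a := by
      have hsq : (1 / Real.pi * (a * b) * s) ^ 2 = ((k:ℝ) * b) ^ 2 + ((j:ℝ) * a) ^ 2 := by
        rw [mul_pow, mul_pow, hs2]
        simp only [hlam]
        field_simp
      have hkb0 : (0:ℝ) ≤ (k:ℝ) * b := by nlinarith
      have hja0 : (0:ℝ) ≤ (j:ℝ) * a := by nlinarith
      have hu0 : (0:ℝ) ≤ 1 / Real.pi * (a * b) * s := by positivity
      nlinarith [hsq, mul_nonneg hkb0 hja0, hu0]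
    constructor
    · have h1 : 1 / Real.pi * (a * b) ≤ ((k:ℝ) * b + (j:ℝ) * a) / s :=
        (le_div_iff₀ hspos).mpr hkey
      have h2 : F (k, j) = ((k:ℝ) * b + (j:ℝ) * a) / s - (a + b) / s := by
        simp only [hF]
        rw [show (((k:ℝ)) - 1) * b + (((j:ℝ)) - 1) * a = (k * b + j * a) - (a + b) by ring,
          sub_div]
      rw [h2]
      exact sub_le_sub_right h1 _
    · simp only [hF]
      apply div_nonneg _ (Real.sqrt_nonneg _)
      nlinarith
  -- lower bound
  have hGt : Tendsto (fun p => 1 / Real.pi * (a * b) - (a + b) / Real.sqrt (lam p)) L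
      (𝓝 (1 / Real.pi * (a * b))) := by
    simpa using tendsto_const_nhds.sub hE
  have hFbdd : IsBoundedUnder (· ≥ ·) L F :=
    ⟨0, eventually_map.2 (hSev.mono fun p hp => (hpoint p hp).2)⟩
  have hfreq : ∀ c, 1 / Real.pi * (a * b) < c → ∃ᶠ p in L, F p ≤ c := by
    intro c hc
    have hFg : Tendsto (fun j : ℕ => F (1, j)) atTop (𝓝 (1 / Real.pi * (a * b))) := by
      have : (fun j : ℕ => F (1, j)) = fun j : ℕ =>
          ((j : ℝ) - 1) * a / Real.sqrt ((Real.pi / a) ^ 2 + (Real.pi * j / b) ^ 2) := by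
        funext j
        simp only [hF, hlam]
        norm_num
      rw [this, show 1 / Real.pi * (a * b) = a * b / Real.pi by ring]
      exact hP1
    have hev : ∀ᶠ j in atTop, F (1, j) ≤ c := hFg.eventually_le_const hc
    have hfr : ∃ᶠ p in map (fun j : ℕ => ((1:ℕ), j)) atTop, F p ≤ c :=
      frequently_map.mpr hev.frequently
    exact hfr.filter_mono hg
  have hcobdd : IsCoboundedUnder (· ≥ ·) L F :=
    IsCoboundedUnder.of_frequently_le (hfreq _ (lt_add_of_pos_right _ one_pos))
  apply le_antisymm
  · -- liminf ≤
    refine le_of_forall_pos_le_add fun ε hε => ?_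
    exact liminf_le_of_frequently_le (hfreq _ (lt_add_of_pos_right _ hε)) hFbdd
  · -- ≤ liminf
    refine le_of_forall_sub_le fun ε hε => ?_
    apply le_liminf_of_le hcobdd
    have h1 : ∀ᶠ p in L, 1 / Real.pi * (a * b) - ε
        ≤ 1 / Real.pi * (a * b) - (a + b) / Real.sqrt (lam p) :=
      hGt.eventually_const_le (by linarith)
    filter_upwards [h1, hSev] with p hp1 hp2
    exact hp1.trans (hpoint p hp2).1
end

section
/- Let C > 0 and let f : ℕ × ℕ → ℝ be a function satisfying k + πl − C ≤ f(k,l) ≤ (π/2)k + πl + C for all integers k ≥ 0 and l ≥ 1. Then there exists N such that for all k ≥ N and all s ≥ N, the sum Σ_{l=1}^{s−1} f(k,l)/f(k,s) is at least s/2. -/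
/-- If `f : ℕ × ℕ → ℝ` satisfies `k + πl − C ≤ f(k,l) ≤ (π/2)k + πl + C` for all
`k ≥ 0` and `l ≥ 1`, then there is `N` such that for all `k ≥ N` and `s ≥ N` one has
`Σ_{l=1}^{s−1} f(k,l)/f(k,s) ≥ s/2`. -/
theorem stmt_10 (C : ℝ) (hC : 0 < C) (f : ℕ × ℕ → ℝ)
    (hf : ∀ k l : ℕ, 1 ≤ l →
      (k : ℝ) + Real.pi * l - C ≤ f (k, l) ∧ f (k, l) ≤ Real.pi / 2 * k + Real.pi * l + C) :
    ∃ N : ℕ, ∀ k ≥ N, ∀ s ≥ N,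
      (s : ℝ) / 2 ≤ ∑ l ∈ Finset.Icc 1 (s - 1), f (k, l) / f (k, s) := by
  obtain ⟨N, hN⟩ := exists_nat_ge (16 + 15 * C)
  refine ⟨N, fun k hk s hs => ?_⟩
  have pi_lt : Real.pi < 3.15 := by linarith [Real.pi_lt_d2]
  have pi_gt : 3 < Real.pi := Real.pi_gt_three
  have hk' : (16 : ℝ) + 15 * C ≤ k := le_trans hN (Nat.cast_le.2 hk)
  have hs' : (16 : ℝ) + 15 * C ≤ s := le_trans hN (Nat.cast_le.2 hs)
  have hs1 : 1 ≤ s := by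
    have : (1:ℝ) ≤ s := by linarith
    exact_mod_cast this
  have hcast : ((s - 1 : ℕ) : ℝ) = (s : ℝ) - 1 := by
    rw [Nat.cast_sub hs1]; norm_num
  set D : ℝ := Real.pi / 2 * k + Real.pi * s + C with hDdef
  have hkpos : (0:ℝ) ≤ k := Nat.cast_nonneg k
  have hspos : (0:ℝ) ≤ s := Nat.cast_nonneg s
  have hDpos : 0 < D := by
    have : 0 < Real.pi := by linarith
    positivity
  have hfs := hf k s hs1
  have hfspos : 0 < f (k, s) := by nlinarith [hfs.1]
  have hstep : ∀ l ∈ Finset.Icc 1 (s-1),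
      ((k:ℝ) + Real.pi * l - C) / D ≤ f (k, l) / f (k, s) := by
    intro l hl
    rw [Finset.mem_Icc] at hl
    have hfl := hf k l hl.1
    have h1 : (1:ℝ) ≤ l := by exact_mod_cast hl.1
    refine div_le_div₀ (le_trans ?_ hfl.1) hfl.1 hfspos hfs.2
    nlinarith
  have hsuml : (∑ l ∈ Finset.Icc 1 (s-1), (l:ℝ)) = ((s:ℝ) - 1) * s / 2 := by
    have hIcc : Finset.Icc 1 (s-1) = Finset.Ico 1 s := by
      rw [← Finset.Ico_add_one_right_eq_Icc]
      congr 1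
      omega
    have hcons : (∑ i ∈ Finset.Ico 0 1, i) + (∑ i ∈ Finset.Ico 1 s, i)
        = ∑ i ∈ Finset.Ico 0 s, i :=
      Finset.sum_Ico_consecutive _ (Nat.zero_le 1) hs1
    have h01 : (∑ i ∈ Finset.Ico 0 1, i) = 0 := by decide
    have hrange : (∑ i ∈ Finset.Icc 1 (s-1), i) = ∑ i ∈ Finset.range s, i := by
      rw [hIcc, Finset.range_eq_Ico, ← hcons, h01, zero_add]
    have h2 : (∑ i ∈ Finset.Icc 1 (s-1), i) * 2 = s * (s - 1) := by
      rw [hrange, Finset.sum_range_id_mul_two]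
    have hc := congrArg (Nat.cast : ℕ → ℝ) h2
    push_cast [Nat.cast_sub hs1] at hc
    linarith
  have hcard : ((Finset.Icc 1 (s-1)).card : ℝ) = (s:ℝ) - 1 := by
    rw [Nat.card_Icc]
    simp only [Nat.add_sub_cancel]
    exact hcast
  have hsum : (∑ l ∈ Finset.Icc 1 (s-1), ((k:ℝ) + Real.pi * l - C))
      = ((s:ℝ) - 1) * ((k:ℝ) - C) + Real.pi * (((s:ℝ) - 1) * s / 2) := by
    rw [Finset.sum_sub_distrib, Finset.sum_add_distrib, ← Finset.mul_sum, hsuml,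
      Finset.sum_const, Finset.sum_const, nsmul_eq_mul, nsmul_eq_mul, hcard]
    ring
  calc (s:ℝ)/2 ≤ ∑ l ∈ Finset.Icc 1 (s-1), ((k:ℝ) + Real.pi * l - C) / D := by
        rw [← Finset.sum_div, hsum, le_div_iff₀ hDpos, hDdef]
        nlinarith [mul_nonneg (mul_nonneg (by linarith : (0:ℝ) ≤ 3.15 - Real.pi) hkpos) hspos,
          mul_nonneg hkpos (by linarith : (0:ℝ) ≤ (s:ℝ) - 16),
          mul_nonneg hspos (by linarith : (0:ℝ) ≤ (k:ℝ) - 16 - 15*C),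
          mul_nonneg hC.le hspos]
    _ ≤ _ := Finset.sum_le_sum hstep
end

section
/- Let C > 0 and let f : ℕ × ℕ → ℝ satisfy: (i) k + πl − C ≤ f(k,l) ≤ (π/2)k + πl + C for all integers k ≥ 0, l ≥ 1, and (ii) for each k, the sequence l ↦ f(k,l) is strictly increasing and positive. Define L(k,s) = (2π·Σ_{l=1}^{s−1} f(k,l)/f(k,s) + 2k)/f(k,s). Then for every ε > 0 there exists N such that for all k ≥ N and s ≥ N one has 1 − ε ≤ L(k,s) ≤ 2 + ε. In particular, along any sequence (k_n, s_n) with k_n → ∞ and s_n → ∞, every limit point of L(k_n, s_n) lies in the interval [1, 2]. -/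
open Filter Topology

private lemma gauss_icc (m : ℕ) : ∑ l ∈ Finset.Icc 1 m, (l:ℝ) = m*(m+1)/2 := by
  induction m with
  | zero => simp
  | succ n ih =>
    rw [Finset.sum_Icc_succ_top (Nat.succ_le_succ (Nat.zero_le n)), ih]
    push_cast; ring

private lemma lower_key (C K S : ℝ) (hC : 0 < C)
    (hK : 20 + 16*C + 2*C^2 ≤ K) (hS : 20 + 16*C + 2*C^2 ≤ S) :
    (Real.pi/2*K + Real.pi*S + C) * (Real.pi/2*K + Real.pi*S + C)
      ≤ 2*Real.pi*((S-1)*K + Real.pi*(S-1)*S/2 - C*(S-1))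
        + 2*K*(Real.pi/2*K + Real.pi*S + C) := by
  set P := Real.pi with hP
  have hπl : (3.141 : ℝ) < P := by rw [hP]; linarith [Real.pi_gt_d6]
  have hπu : P < 3.15 := Real.pi_lt_d2
  have hP0 : (0:ℝ) < P := by linarith
  have hK0 : (0:ℝ) ≤ K := by nlinarith [sq_nonneg C]
  have hS0 : (0:ℝ) ≤ S := by nlinarith [sq_nonneg C]
  have hS1 : (1:ℝ) ≤ S := by nlinarith [sq_nonneg C]
  have hPsq : P^2 ≤ 9.9225 := by nlinarith
  have hKC0 : 0 ≤ K*C := mul_nonneg hK0 hC.le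
  have hCS0 : 0 ≤ C*S := mul_nonneg hC.le hS0
  have hA : 0 ≤ K*(0.66*K - 6.3 - 1.15*C) := by
    apply mul_nonneg hK0
    nlinarith [sq_nonneg C]
  have hB : 0 ≤ S*(2.64*K - 9.93 - 12.6*C - C^2) := by
    apply mul_nonneg hS0
    nlinarith [sq_nonneg C]
  have hD1 : 0 ≤ (P - P^2/4 - 0.66) * K^2 :=
    mul_nonneg (by linarith) (sq_nonneg K)
  have hD2 : 0 ≤ (4*P - P^2 - 2.64) * (K*S) :=
    mul_nonneg (by linarith) (mul_nonneg hK0 hS0)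
  have hPK : 0 ≤ (6.3 - 2*P)*K := mul_nonneg (by linarith) hK0
  have hPKC : 0 ≤ (1.15 - (P-2))*(K*C) := mul_nonneg (by linarith) hKC0
  have hP2S : 0 ≤ (9.9225 - P^2)*S := mul_nonneg (by linarith) hS0
  have hPCS : 0 ≤ (12.6 - 4*P)*(C*S) := mul_nonneg (by linarith) hCS0
  have hC2 : 0 ≤ C^2*(S-1) := mul_nonneg (sq_nonneg C) (by linarith)
  have hPC : 0 ≤ 2*P*C := by positivity
  nlinarith [hA, hB, hD1, hD2, hPK, hPKC, hP2S, hPCS, hC2, hPC]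

private lemma T0_nonneg (C K S : ℝ) (hC : 0 < C)
    (hK : 20 + 16*C + 2*C^2 ≤ K) (hS : 20 + 16*C + 2*C^2 ≤ S) :
    0 ≤ (S-1)*K + Real.pi*(S-1)*S/2 - C*(S-1) := by
  have hπl : (3.141 : ℝ) < Real.pi := by linarith [Real.pi_gt_d6]
  have hS1 : (1:ℝ) ≤ S := by nlinarith [sq_nonneg C]
  have hKC : C ≤ K := by nlinarith [sq_nonneg C]
  have h1 : 0 ≤ S - 1 := by linarith
  have h2 : 0 ≤ K - C := by linarith
  nlinarith [mul_nonneg h1 h2, mul_nonneg (mul_nonneg h1 (by linarith : (0:ℝ) ≤ S)) (by linarith : (0:ℝ) ≤ Real.pi)]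

set_option maxHeartbeats 1000000 in
/-- Abstract Case 3 of the disc theorem: if `f : ℕ × ℕ → ℝ` satisfies
`k + πl − C ≤ f(k,l) ≤ (π/2)k + πl + C` for `k ≥ 0`, `l ≥ 1`, and for each `k` the
sequence `l ↦ f(k,l)` is strictly increasing and positive, then for
`L(k,s) = (2π·Σ_{l=1}^{s−1} f(k,l)/f(k,s) + 2k)/f(k,s)` one has: for every `ε > 0`
there is `N` with `1 − ε ≤ L(k,s) ≤ 2 + ε` whenever `k, s ≥ N`; in particular, along
any sequence `(k_n, s_n)` with `k_n → ∞` and `s_n → ∞`, every limit point of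
`L(k_n, s_n)` lies in `[1, 2]`. -/
theorem stmt_11 (C : ℝ) (hC : 0 < C) (f : ℕ × ℕ → ℝ)
    (hbound : ∀ k l : ℕ, 1 ≤ l →
      (k : ℝ) + Real.pi * l - C ≤ f (k, l) ∧ f (k, l) ≤ Real.pi / 2 * k + Real.pi * l + C)
    (hmono : ∀ k : ℕ, StrictMono fun l => f (k, l))
    (hpos : ∀ k l : ℕ, 0 < f (k, l))
    (L : ℕ → ℕ → ℝ)
    (hL : ∀ k s : ℕ, L k s =
      (2 * Real.pi * ∑ l ∈ Finset.Icc 1 (s - 1), f (k, l) / f (k, s) + 2 * k) / f (k, s)) :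
    (∀ ε > (0 : ℝ), ∃ N : ℕ, ∀ k ≥ N, ∀ s ≥ N, 1 - ε ≤ L k s ∧ L k s ≤ 2 + ε)
      ∧ ∀ (kn sn : ℕ → ℕ), Tendsto kn atTop atTop → Tendsto sn atTop atTop →
          ∀ x : ℝ, MapClusterPt x atTop (fun n => L (kn n) (sn n)) →
            x ∈ Set.Icc (1 : ℝ) 2 := by
  have hπl : (3.141 : ℝ) < Real.pi := by linarith [Real.pi_gt_d6]
  have hπu : Real.pi < 3.15 := Real.pi_lt_d2
  have main : ∀ ε > (0 : ℝ), ∃ N : ℕ, ∀ k ≥ N, ∀ s ≥ N, 1 - ε ≤ L k s ∧ L k s ≤ 2 + ε := by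
    intro ε hε
    refine ⟨⌈(20:ℝ) + 16*C + 2*C^2 + 2*C/ε⌉₊ + 1, ?_⟩
    intro k hk s hs
    have hNge : (20:ℝ) + 16*C + 2*C^2 + 2*C/ε ≤ ((⌈(20:ℝ) + 16*C + 2*C^2 + 2*C/ε⌉₊ + 1 : ℕ) : ℝ) := by
      have := Nat.le_ceil ((20:ℝ) + 16*C + 2*C^2 + 2*C/ε)
      push_cast
      linarith
    have hCe : 0 < 2*C/ε := by positivity
    have hK : (20:ℝ) + 16*C + 2*C^2 + 2*C/ε ≤ (k : ℝ) :=
      le_trans hNge (Nat.cast_le.mpr hk)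
    have hS : (20:ℝ) + 16*C + 2*C^2 + 2*C/ε ≤ (s : ℝ) :=
      le_trans hNge (Nat.cast_le.mpr hs)
    have hK20 : (20:ℝ) + 16*C + 2*C^2 ≤ (k:ℝ) := by linarith
    have hS20 : (20:ℝ) + 16*C + 2*C^2 ≤ (s:ℝ) := by linarith
    have hs1 : 1 ≤ s := le_trans (Nat.succ_le_succ (Nat.zero_le _)) hs
    have hS1 : (1:ℝ) ≤ (s:ℝ) := by exact_mod_cast hs1
    have hF : 0 < f (k, s) := hpos k s
    have hcast : ((s - 1 : ℕ) : ℝ) = (s : ℝ) - 1 := by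
      push_cast [Nat.cast_sub hs1]; ring
    obtain ⟨hFlo, hFup⟩ := hbound k s hs1
    have hK0 : (0:ℝ) ≤ (k:ℝ) := by positivity
    have hF0pos : 0 < (k : ℝ) + Real.pi * s - C := by nlinarith [sq_nonneg C]
    have hF1pos : 0 < Real.pi / 2 * k + Real.pi * s + C := by nlinarith
    have hsumdiv : ∑ l ∈ Finset.Icc 1 (s - 1), f (k, l) / f (k, s)
        = (∑ l ∈ Finset.Icc 1 (s - 1), f (k, l)) / f (k, s) := by
      rw [Finset.sum_div]
    set T : ℝ := ∑ l ∈ Finset.Icc 1 (s - 1), f (k, l) with hTdef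
    set T0 : ℝ := ((s:ℝ) - 1) * k + Real.pi * ((s:ℝ) - 1) * s / 2 - C * ((s:ℝ) - 1) with hT0def
    have hTlo : T0 ≤ T := by
      have h1 : ∑ l ∈ Finset.Icc 1 (s - 1), ((k : ℝ) + Real.pi * l - C) ≤ T := by
        apply Finset.sum_le_sum
        intro l hl
        exact (hbound k l (Finset.mem_Icc.mp hl).1).1
      have h2 : ∑ l ∈ Finset.Icc 1 (s - 1), ((k : ℝ) + Real.pi * l - C)
          = ((s-1:ℕ):ℝ) * ((k:ℝ) - C) + Real.pi * (((s-1:ℕ):ℝ) * (((s-1:ℕ):ℝ)+1) / 2) := by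
        rw [Finset.sum_sub_distrib, Finset.sum_add_distrib, Finset.sum_const, Finset.sum_const,
          ← Finset.mul_sum, gauss_icc, Nat.card_Icc]
        simp
        ring
      rw [h2, hcast] at h1
      have hss : ((s:ℝ) - 1) + 1 = (s:ℝ) := by ring
      rw [hT0def]
      nlinarith [h1]
    have hT0nn : 0 ≤ T0 := T0_nonneg C k s hC hK20 hS20
    have hTnn : 0 ≤ T := le_trans hT0nn hTlo
    have hTup : T ≤ ((s:ℝ) - 1) * f (k, s) := by
      have h1 : ∀ l ∈ Finset.Icc 1 (s - 1), f (k, l) ≤ f (k, s) := by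
        intro l hl
        have hls : l < s := lt_of_le_of_lt (Finset.mem_Icc.mp hl).2 (Nat.sub_lt hs1 one_pos)
        exact le_of_lt (hmono k hls)
      calc T ≤ ∑ l ∈ Finset.Icc 1 (s - 1), f (k, s) := Finset.sum_le_sum h1
        _ = ((s-1:ℕ):ℝ) * f (k, s) := by rw [Finset.sum_const, Nat.card_Icc]; simp
        _ = ((s:ℝ) - 1) * f (k, s) := by rw [hcast]
    rw [hL, hsumdiv]
    clear hL hbound hmono hpos hk hs hNge
    set F1 : ℝ := Real.pi / 2 * k + Real.pi * s + C with hF1def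
    clear_value T T0 F1
    constructor
    · -- lower bound: show 1 ≤ L, hence 1 - ε ≤ L
      have key : 1 ≤ (2 * Real.pi * (T / f (k, s)) + 2 * k) / f (k, s) := by
        rw [le_div_iff₀ hF]
        have hdiv : T0 / F1 ≤ T / f (k, s) :=
          div_le_div₀ hTnn hTlo hF hFup
        have hkey2 : F1 * F1 ≤ 2 * Real.pi * T0 + 2 * k * F1 := by
          rw [hF1def, hT0def]
          exact lower_key C k s hC hK20 hS20
        have h3 : f (k, s) ≤ 2 * Real.pi * (T0 / F1) + 2 * k := by
          have hcalc : 2 * Real.pi * (T0 / F1) + 2 * k - F1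
              = (2 * Real.pi * T0 + 2 * k * F1 - F1 * F1) / F1 := by
            field_simp
          have h4 : 0 ≤ 2 * Real.pi * (T0 / F1) + 2 * k - F1 := by
            rw [hcalc]
            apply div_nonneg (by linarith) hF1pos.le
          linarith
        have hπpos : (0:ℝ) < Real.pi := by linarith
        have h5 : 2 * Real.pi * (T0 / F1) ≤ 2 * Real.pi * (T / f (k, s)) :=
          mul_le_mul_of_nonneg_left hdiv (by positivity)
        linarith
      linarith
    · -- upper bound
      have hnum : 2 * Real.pi * (T / f (k, s)) + 2 * k ≤ 2 * Real.pi * ((s:ℝ) - 1) + 2 * k := by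
        have hq : T / f (k, s) ≤ (s:ℝ) - 1 := by
          rw [div_le_iff₀ hF]; linarith
        have h6 : 2 * Real.pi * (T / f (k, s)) ≤ 2 * Real.pi * ((s:ℝ) - 1) :=
          mul_le_mul_of_nonneg_left hq (by positivity)
        linarith
      have hnum0 : 0 ≤ 2 * Real.pi * ((s:ℝ) - 1) + 2 * k := by
        have h0 : (0:ℝ) ≤ (s:ℝ) - 1 := by linarith
        have : (0:ℝ) < Real.pi := by linarith
        positivity
      have hstep : (2 * Real.pi * (T / f (k, s)) + 2 * k) / f (k, s)
          ≤ (2 * Real.pi * ((s:ℝ) - 1) + 2 * k) / ((k : ℝ) + Real.pi * s - C) :=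
        div_le_div₀ hnum0 hnum hF0pos hFlo
      refine le_trans hstep ?_
      rw [div_le_iff₀ hF0pos]
      have hεk : 2*C ≤ ε * ((k:ℝ) + Real.pi * s - C) := by
        have h1 : 2*C/ε ≤ (k:ℝ) := by linarith [sq_nonneg C]
        have h2 : 2*C ≤ ε * k := by
          rw [div_le_iff₀ hε] at h1; linarith
        have hps : C ≤ Real.pi * s := by
          have h7 : 0 ≤ (Real.pi - 3.141) * s := mul_nonneg (by linarith) (by positivity)
          nlinarith [sq_nonneg C]
        have h8 : 0 ≤ ε * (Real.pi * s - C) := mul_nonneg hε.le (by linarith)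
        have h9 : ε * ((k:ℝ) + Real.pi * s - C) = ε * k + ε * (Real.pi * s - C) := by ring
        linarith
      have h10 : (2+ε) * ((k:ℝ) + Real.pi * s - C)
          = 2*((k:ℝ) + Real.pi * s - C) + ε * ((k:ℝ) + Real.pi * s - C) := by ring
      linarith
  refine ⟨main, ?_⟩
  intro kn sn hkn hsn x hx
  have key : ∀ ε > (0:ℝ), 1 - ε ≤ x ∧ x ≤ 2 + ε := by
    intro ε hε
    obtain ⟨N, hN⟩ := main (ε/2) (by linarith)
    have hev : ∀ᶠ n in atTop,
        1 - ε/2 ≤ L (kn n) (sn n) ∧ L (kn n) (sn n) ≤ 2 + ε/2 := by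
      filter_upwards [hkn.eventually_ge_atTop N, hsn.eventually_ge_atTop N] with n h1 h2
      exact hN _ h1 _ h2
    have hnb : Set.Ioo (x - ε/2) (x + ε/2) ∈ 𝓝 x :=
      Ioo_mem_nhds (by linarith) (by linarith)
    have hfreq := (mapClusterPt_iff_frequently.mp hx _ hnb).and_eventually hev
    obtain ⟨n, ⟨⟨ha, hb⟩, hc, hd⟩⟩ := hfreq.exists
    exact ⟨by linarith, by linarith⟩
  constructor
  · by_contra h
    push_neg at h
    have := (key ((1 - x)/2) (by linarith)).1
    linarith
  · by_contra h
    push_neg at h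
    have := (key ((x - 2)/2) (by linarith)).2
    linarith
end
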